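/- arXiv:math/0406134 — 2 statements merged into one kernel-verified Lean document; each statement's English description precedes it below -/
import Mathlib

section
/- If F is a real 2-uniform (n,k)-frame, then e_2^2(G) ≤ e_2^2(F) for every uniform real (n,k)-frame G; i.e., 2-uniform frames maximize the error e_2^2 among uniform frames. Moreover, if there exists a uniform real (n,k)-frame that is not 2-uniform, then no minimizer of e_2^2 among uniform real (n,k)-frames is 2-uniform. -/
open Matrix
open scoped Classical

noncomputable section

namespace FramesErasures

/-- The constant `c_{n,k} = sqrt(k(n-k)/(n^2(n-1)))`. -/
noncomputable def c (n k : ℕ) : ℝ :=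
  Real.sqrt ((k : ℝ) * ((n : ℝ) - k) / ((n : ℝ) ^ 2 * ((n : ℝ) - 1)))

/-- Operator norm (ℓ²→ℓ²) of a square real matrix. -/
noncomputable def opNorm {k : ℕ} (A : Matrix (Fin k) (Fin k) ℝ) : ℝ :=
  ‖Matrix.toEuclideanCLM (𝕜 := ℝ) A‖

/-- The diagonal 0-1 matrix with 1's exactly at the positions in `S`. -/
def diagS {n : ℕ} (S : Finset (Fin n)) : Matrix (Fin n) (Fin n) ℝ :=
  Matrix.diagonal fun i => if i ∈ S then 1 else 0

/-- `e_m^∞(F)`: the maximal norm of an error operator for `m` erasures. -/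
noncomputable def errInf {n k : ℕ} (V : Matrix (Fin n) (Fin k) ℝ) (m : ℕ) : ℝ :=
  sSup {x : ℝ | ∃ S : Finset (Fin n), S.card = m ∧ x = opNorm (Vᵀ * diagS S * V)}

/-- `e_m^p(F)`: the ℓᵖ-average of the norms of the error operators for `m` erasures. -/
noncomputable def errP {n k : ℕ} (V : Matrix (Fin n) (Fin k) ℝ) (m : ℕ) (p : ℝ) : ℝ :=
  ((n.choose m : ℝ)⁻¹ *
      ∑ S ∈ Finset.univ.filter fun S : Finset (Fin n) => S.card = m,
        opNorm (Vᵀ * diagS S * V) ^ p) ^ (1 / p)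

/-- A Parseval frame is uniform if all diagonal Grammian entries equal `k/n`. -/
def Uniform (n k : ℕ) (V : Matrix (Fin n) (Fin k) ℝ) : Prop :=
  ∀ j, (V * Vᵀ) j j = (k : ℝ) / n

/-- 2-uniformity, via the equiangularity characterization. -/
def TwoUniform (n k : ℕ) (V : Matrix (Fin n) (Fin k) ℝ) : Prop :=
  Uniform n k V ∧ ∀ i j, i ≠ j → |(V * Vᵀ) i j| = c n k

/-- The `n×n` all-ones matrix. -/
def Jmat (n : ℕ) : Matrix (Fin n) (Fin n) ℝ :=
  Matrix.of fun _ _ => 1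

/-- A real 2-uniform `(n,k)`-frame, given by its analysis operator and signature matrix. -/
structure TwoUniformFrame (n k : ℕ) where
  V : Matrix (Fin n) (Fin k) ℝ
  Q : Matrix (Fin n) (Fin n) ℝ
  parseval : Vᵀ * V = 1
  symm : Qᵀ = Q
  diag : ∀ i, Q i i = 0
  offdiag : ∀ i j, i ≠ j → Q i j = 1 ∨ Q i j = -1
  gram : V * Vᵀ = ((k : ℝ) / n) • (1 : Matrix (Fin n) (Fin n) ℝ) + c n k • Q

/-- The graph associated with a 2-uniform frame: `i ≠ j` adjacent iff `Q i j = -1`. -/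
def frameGraph {n k : ℕ} (F : TwoUniformFrame n k) : SimpleGraph (Fin n) where
  Adj i j := i ≠ j ∧ F.Q i j = -1
  symm := ⟨by
    intro i j h
    refine ⟨h.1.symm, ?_⟩
    have h2 : F.Q i j = F.Q j i := by
      have := congrFun (congrFun F.symm j) i
      simpa [Matrix.transpose_apply] using this
    rw [← h2]
    exact h.2⟩
  loopless := ⟨fun i h => h.1 rfl⟩

/-- A graph is complete bipartite (with one part possibly empty). -/
def IsCompleteBipartite {α : Type*} (G : SimpleGraph α) : Prop :=
  ∃ A : Set α, ∀ i j, G.Adj i j ↔ ((i ∈ A) ↔ (j ∉ A))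

/-- `G` has an induced complete bipartite subgraph on `m` vertices. -/
def HasInducedCompleteBipartite {n : ℕ} (G : SimpleGraph (Fin n)) (m : ℕ) : Prop :=
  ∃ S : Finset (Fin n), S.card = m ∧
    IsCompleteBipartite (G.induce (S : Set (Fin n)))

/-- The Seidel adjacency matrix of a graph. -/
noncomputable def seidel {α : Type*} [DecidableEq α] (G : SimpleGraph α) : Matrix α α ℝ :=
  Matrix.of fun i j => if i = j then 0 else if G.Adj i j then -1 else 1

/-- Switching equivalence of graphs: Seidel matrices conjugate by a product of a permutation
and a `±1` diagonal matrix. -/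
def SwitchingEquivalent {α : Type*} [DecidableEq α] (G H : SimpleGraph α) : Prop :=
  ∃ (σ : Equiv.Perm α) (ε : α → ℝ), (∀ i, ε i = 1 ∨ ε i = -1) ∧
    ∀ i j, seidel H i j = ε i * ε j * seidel G (σ i) (σ j)

/-- `G ∈ 𝒢_m^(s)`: the minimal number of edges in the switching class of `G` equals `s`. -/
def MinSwitchEdges {α : Type*} [DecidableEq α] (G : SimpleGraph α) (s : ℕ) : Prop :=
  IsLeast {t : ℕ | ∃ H : SimpleGraph α, SwitchingEquivalent G H ∧ H.edgeSet.ncard = t} s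

/-- `lam` is the largest eigenvalue of the real matrix `A`. -/
def IsMaxEigenvalue {m : ℕ} (A : Matrix (Fin m) (Fin m) ℝ) (lam : ℝ) : Prop :=
  (∃ v : Fin m → ℝ, v ≠ 0 ∧ A.mulVec v = lam • v) ∧
  ∀ μ : ℝ, (∃ v : Fin m → ℝ, v ≠ 0 ∧ A.mulVec v = μ • v) → μ ≤ lam

/-- A 2-uniform frame is 3-uniform if the error norm is the same for all triple erasures. -/
def ThreeUniform {n k : ℕ} (F : TwoUniformFrame n k) : Prop :=
  ∀ S T : Finset (Fin n), S.card = 3 → T.card = 3 →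
    opNorm (F.Vᵀ * diagS S * F.V) = opNorm (F.Vᵀ * diagS T * F.V)

set_option linter.unreachableTactic false
set_option linter.unusedTactic false

variable {n k : ℕ}

lemma enorm_sq {k : ℕ} (x : EuclideanSpace ℝ (Fin k)) : ‖x‖ ^ 2 = ∑ i, x i ^ 2 := by
  rw [EuclideanSpace.norm_eq, Real.sq_sqrt (by positivity)]
  simp [sq_abs]

lemma opNorm_rank2 {k : ℕ} (u v : Fin k → ℝ) (a b : ℝ)
    (hu : ∑ p, u p * u p = a) (hv : ∑ p, v p * v p = a)
    (hb : ∑ p, u p * v p = b) :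
    opNorm (Matrix.of fun p q => u p * u q + v p * v q) = a + |b| := by
  set A : Matrix (Fin k) (Fin k) ℝ := Matrix.of fun p q => u p * u q + v p * v q with hA
  have ha0 : 0 ≤ a := hu ▸ Finset.sum_nonneg fun p _ => mul_self_nonneg _
  have hab0 : 0 ≤ a + |b| := by positivity
  have hmv : ∀ x : Fin k → ℝ, ∀ p, A.mulVec x p =
      (∑ q, u q * x q) * u p + (∑ q, v q * x q) * v p := by
    intro x p
    simp only [Matrix.mulVec, dotProduct, hA, Matrix.of_apply]
    calc ∑ q, (u p * u q + v p * v q) * x q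
        = ∑ q, (u p * (u q * x q) + v p * (v q * x q)) := by
          apply Finset.sum_congr rfl; intros; ring
      _ = u p * (∑ q, u q * x q) + v p * (∑ q, v q * x q) := by
          rw [Finset.sum_add_distrib, ← Finset.mul_sum, ← Finset.mul_sum]
      _ = _ := by ring
  have quad : ∀ P Q : ℝ, a * P ^ 2 + 2 * b * P * Q + a * Q ^ 2 ≤ (a + |b|) * (P ^ 2 + Q ^ 2) := by
    intro P Q
    rcases abs_cases b with ⟨h1, _⟩ | ⟨h1, _⟩ <;> rw [h1] <;>
      nlinarith [sq_nonneg (P - Q), sq_nonneg (P + Q)]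
  have hwn : ∀ P Q : ℝ, ∑ q, (P * u q + Q * v q) ^ 2 = a * P ^ 2 + 2 * b * P * Q + a * Q ^ 2 := by
    intro P Q
    calc ∑ q, (P * u q + Q * v q) ^ 2
        = ∑ q, (P ^ 2 * (u q * u q) + (2 * P * Q) * (u q * v q) + Q ^ 2 * (v q * v q)) := by
          apply Finset.sum_congr rfl; intros; ring
      _ = P ^ 2 * (∑ q, u q * u q) + (2 * P * Q) * (∑ q, u q * v q) + Q ^ 2 * (∑ q, v q * v q) := by
          rw [Finset.sum_add_distrib, Finset.sum_add_distrib, ← Finset.mul_sum, ← Finset.mul_sum,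
            ← Finset.mul_sum]
      _ = _ := by rw [hu, hv, hb]; ring
  -- Bessel bound
  have bessel : ∀ x : EuclideanSpace ℝ (Fin k),
      (∑ q, u q * x q) ^ 2 + (∑ q, v q * x q) ^ 2 ≤ (a + |b|) * ‖x‖ ^ 2 := by
    intro x
    set P := ∑ q, u q * x q with hP
    set Q := ∑ q, v q * x q with hQ
    have hwx : ∑ q, (P * u q + Q * v q) * x q = P ^ 2 + Q ^ 2 := by
      calc ∑ q, (P * u q + Q * v q) * x q
          = ∑ q, (P * (u q * x q) + Q * (v q * x q)) := by
            apply Finset.sum_congr rfl; intros; ring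
        _ = P * (∑ q, u q * x q) + Q * (∑ q, v q * x q) := by
            rw [Finset.sum_add_distrib, ← Finset.mul_sum, ← Finset.mul_sum]
        _ = _ := by rw [← hP, ← hQ]; ring
    have cs := Finset.sum_mul_sq_le_sq_mul_sq Finset.univ (fun q => P * u q + Q * v q)
      (fun q => x q)
    rw [hwx, hwn P Q] at cs
    have hx2 : ∑ q, x q ^ 2 = ‖x‖ ^ 2 := (enorm_sq x).symm
    rw [hx2] at cs
    have h2 := quad P Q
    have hxx : 0 ≤ ‖x‖ ^ 2 := by positivity
    have key : (P ^ 2 + Q ^ 2) ^ 2 ≤ (a + |b|) * (P ^ 2 + Q ^ 2) * ‖x‖ ^ 2 := by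
      calc (P ^ 2 + Q ^ 2) ^ 2 ≤ (a * P ^ 2 + 2 * b * P * Q + a * Q ^ 2) * ‖x‖ ^ 2 := cs
        _ ≤ (a + |b|) * (P ^ 2 + Q ^ 2) * ‖x‖ ^ 2 := by
            apply mul_le_mul_of_nonneg_right h2 hxx
    rcases eq_or_lt_of_le (by positivity : (0:ℝ) ≤ P ^ 2 + Q ^ 2) with h | h
    · rw [← h]; positivity
    · have := (mul_le_mul_iff_of_pos_right h).mp (by nlinarith [key] : (P ^ 2 + Q ^ 2) * (P ^ 2 + Q ^ 2) ≤ ((a + |b|) * ‖x‖ ^ 2) * (P ^ 2 + Q ^ 2))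
      exact this
  -- upper bound
  have upper : opNorm A ≤ a + |b| := by
    apply ContinuousLinearMap.opNorm_le_bound _ hab0
    intro x
    have happ : Matrix.toEuclideanCLM (𝕜 := ℝ) A x =
        (WithLp.equiv 2 (Fin k → ℝ)).symm (A.mulVec ((WithLp.equiv 2 (Fin k → ℝ)) x)) := by
      have := Matrix.toEuclideanCLM_toLp (𝕜 := ℝ) A ((WithLp.equiv 2 (Fin k → ℝ)) x)
      simpa using this
    have hnorm2 : ‖Matrix.toEuclideanCLM (𝕜 := ℝ) A x‖ ^ 2 ≤ ((a + |b|) * ‖x‖) ^ 2 := by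
      rw [happ, enorm_sq]
      have hform : ∀ i : Fin k,
          ((WithLp.equiv 2 (Fin k → ℝ)).symm (A.mulVec ((WithLp.equiv 2 (Fin k → ℝ)) x))) i
            = (∑ q, u q * x q) * u i + (∑ q, v q * x q) * v i := by
        intro i
        exact hmv _ i
      calc ∑ i, (((WithLp.equiv 2 (Fin k → ℝ)).symm
              (A.mulVec ((WithLp.equiv 2 (Fin k → ℝ)) x))) i) ^ 2
          = ∑ i, ((∑ q, u q * x q) * u i + (∑ q, v q * x q) * v i) ^ 2 := by
            apply Finset.sum_congr rfl; intro i _; rw [hform i]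
        _ = a * (∑ q, u q * x q) ^ 2 + 2 * b * (∑ q, u q * x q) * (∑ q, v q * x q)
              + a * (∑ q, v q * x q) ^ 2 := hwn _ _
        _ ≤ (a + |b|) * ((∑ q, u q * x q) ^ 2 + (∑ q, v q * x q) ^ 2) := quad _ _
        _ ≤ (a + |b|) * ((a + |b|) * ‖x‖ ^ 2) := mul_le_mul_of_nonneg_left (bessel x) hab0
        _ = ((a + |b|) * ‖x‖) ^ 2 := by ring
    have h0 : (0:ℝ) ≤ (a + |b|) * ‖x‖ := by positivity
    nlinarith [norm_nonneg (Matrix.toEuclideanCLM (𝕜 := ℝ) A x)]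
  -- eigenvector machinery
  have eig : ∀ y : Fin k → ℝ, y ≠ 0 → A.mulVec y = (a + |b|) • y → a + |b| ≤ opNorm A := by
    intro y hy hAy
    set z : EuclideanSpace ℝ (Fin k) := (WithLp.equiv 2 (Fin k → ℝ)).symm y with hz
    have hz0 : z ≠ 0 := by
      intro h
      apply hy
      have := congrArg (WithLp.equiv 2 (Fin k → ℝ)) h
      simpa [hz] using this
    have happ : Matrix.toEuclideanCLM (𝕜 := ℝ) A z = (a + |b|) • z := by
      rw [hz]
      show Matrix.toEuclideanCLM (𝕜 := ℝ) A (WithLp.toLp 2 y) = _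
      rw [Matrix.toEuclideanCLM_toLp, hAy]
      simp
    have h1 : ‖Matrix.toEuclideanCLM (𝕜 := ℝ) A z‖ = (a + |b|) * ‖z‖ := by
      rw [happ, norm_smul, Real.norm_eq_abs, abs_of_nonneg hab0]
    have h2 := (Matrix.toEuclideanCLM (𝕜 := ℝ) A).le_opNorm z
    rw [h1] at h2
    have hzpos : 0 < ‖z‖ := by
      rcases (norm_nonneg z).lt_or_eq with h | h
      · exact h
      · exact absurd (norm_eq_zero.mp h.symm) hz0
    exact le_of_mul_le_mul_right h2 hzpos
  set s : ℝ := if 0 ≤ b then 1 else -1 with hs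
  have hs2 : s * s = 1 := by rcases le_or_gt 0 b with h | h <;> simp [hs, h, not_le.mpr] <;> norm_num
  have hsb : s * b = |b| := by
    rcases le_or_gt 0 b with h | h
    · simp [hs, h, abs_of_nonneg h]
    · simp [hs, not_le.mpr h, abs_of_neg h]
  by_cases hy : (fun p => u p + s * v p) = (0 : Fin k → ℝ)
  · -- degenerate: everything zero
    have huv : ∀ p, u p = -(s * v p) := by
      intro p
      have := congrFun hy p
      simpa [eq_neg_iff_add_eq_zero] using this
    have hbval : b = -s * a := by
      rw [← hb, ← hv]
      calc ∑ p, u p * v p = ∑ p, (-s) * (v p * v p) := by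
            apply Finset.sum_congr rfl; intro p _; rw [huv p]; ring
        _ = -s * ∑ p, v p * v p := by rw [← Finset.mul_sum]
    have habs : |b| = -a := by rw [← hsb, hbval]; linear_combination (-a) * hs2
    have ha : a = 0 := le_antisymm (by nlinarith [abs_nonneg b]) ha0
    have hb0 : b = 0 := by rw [hbval, ha]; ring
    have hu0 : ∀ p, u p = 0 := by
      intro p
      have hz : ∑ p, u p * u p = 0 := by rw [hu, ha]
      have := (Finset.sum_eq_zero_iff_of_nonneg (fun p _ => mul_self_nonneg (u p))).mp hz p
        (Finset.mem_univ p)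
      exact mul_self_eq_zero.mp this
    have hv0 : ∀ p, v p = 0 := by
      intro p
      have hz : ∑ p, v p * v p = 0 := by rw [hv, ha]
      have := (Finset.sum_eq_zero_iff_of_nonneg (fun p _ => mul_self_nonneg (v p))).mp hz p
        (Finset.mem_univ p)
      exact mul_self_eq_zero.mp this
    have hA0 : A = 0 := by
      ext p q
      simp [hA, hu0, hv0]
    rw [hA0, ha, hb0]
    simp only [opNorm, map_zero, norm_zero, abs_zero, add_zero]
  · refine le_antisymm upper ?_
    apply eig (fun p => u p + s * v p) hy
    funext p
    rw [hmv]
    have hPy : ∑ q, u q * (u q + s * v q) = a + |b| := by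
      calc ∑ q, u q * (u q + s * v q) = ∑ q, (u q * u q + s * (u q * v q)) := by
            apply Finset.sum_congr rfl; intros; ring
        _ = (∑ q, u q * u q) + s * ∑ q, u q * v q := by
            rw [Finset.sum_add_distrib, ← Finset.mul_sum]
        _ = a + |b| := by rw [hu, hb, hsb]
    have hQy : ∑ q, v q * (u q + s * v q) = s * (a + |b|) := by
      calc ∑ q, v q * (u q + s * v q) = ∑ q, (u q * v q + s * (v q * v q)) := by
            apply Finset.sum_congr rfl; intros; ring
        _ = (∑ q, u q * v q) + s * ∑ q, v q * v q := by
            rw [Finset.sum_add_distrib, ← Finset.mul_sum]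
        _ = b + s * a := by rw [hv, hb]
        _ = s * (a + |b|) := by rw [← hsb]; linear_combination (-b) * hs2
    rw [hPy, hQy]
    simp only [Pi.smul_apply, smul_eq_mul]
    ring

variable {n k : ℕ}

lemma block_eq (W : Matrix (Fin n) (Fin k) ℝ) {i j : Fin n} (hij : i ≠ j) :
    Wᵀ * diagS {i, j} * W = Matrix.of fun p q => W i p * W i q + W j p * W j q := by
  ext p q
  rw [Matrix.mul_apply]
  have hstep : ∀ s : Fin n, (Wᵀ * diagS {i, j}) p s * W s q =
      (if s ∈ ({i, j} : Finset (Fin n)) then W s p * W s q else 0) := by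
    intro s
    rw [diagS, Matrix.mul_diagonal, Matrix.transpose_apply]
    split <;> simp
  rw [Finset.sum_congr rfl fun s _ => hstep s, Finset.sum_ite_mem, Finset.univ_inter,
    Finset.sum_pair hij]
  simp

lemma gram_entry (W : Matrix (Fin n) (Fin k) ℝ) (i j : Fin n) :
    (W * Wᵀ) i j = ∑ p, W i p * W j p := by
  rw [Matrix.mul_apply]
  simp [Matrix.transpose_apply]

lemma SG_pair (W : Matrix (Fin n) (Fin k) ℝ) (hunif : Uniform n k W) {i j : Fin n}
    (hij : i ≠ j) :
    opNorm (Wᵀ * diagS {i, j} * W) = (k : ℝ) / n + |(W * Wᵀ) i j| := by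
  rw [block_eq W hij]
  exact opNorm_rank2 (fun p => W i p) (fun p => W j p) ((k : ℝ) / n) ((W * Wᵀ) i j)
    (by rw [← gram_entry]; exact hunif i) (by rw [← gram_entry]; exact hunif j)
    ((gram_entry W i j).symm)

lemma finset_pair_eq_pair_iff {α : Type*} [DecidableEq α] {a b x y : α} :
    ({a, b} : Finset α) = {x, y} ↔ a = x ∧ b = y ∨ a = y ∧ b = x := by
  rw [← Finset.coe_inj]
  push_cast
  exact Set.pair_eq_pair_iff

lemma sum_pairs (f : Finset (Fin n) → ℝ) :
    ∑ p ∈ Finset.univ.offDiag, f {p.1, p.2} =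
      ∑ S ∈ Finset.univ.filter (fun S : Finset (Fin n) => S.card = 2), 2 * f S := by
  rw [Finset.sum_comp f (fun p : Fin n × Fin n => ({p.1, p.2} : Finset (Fin n)))]
  have himg : (Finset.univ.offDiag (α := Fin n)).image
      (fun p : Fin n × Fin n => ({p.1, p.2} : Finset (Fin n))) =
      Finset.univ.filter (fun S : Finset (Fin n) => S.card = 2) := by
    ext S
    simp only [Finset.mem_image, Finset.mem_offDiag, Finset.mem_filter, Finset.mem_univ,
      true_and, ne_eq]
    constructor
    · rintro ⟨⟨x, y⟩, hxy, rfl⟩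
      exact Finset.card_pair hxy
    · intro h2
      obtain ⟨x, y, hxy, rfl⟩ := Finset.card_eq_two.mp h2
      exact ⟨(x, y), hxy, rfl⟩
  rw [himg]
  apply Finset.sum_congr rfl
  intro S hS
  obtain ⟨x, y, hxy, rfl⟩ := Finset.card_eq_two.mp (Finset.mem_filter.mp hS).2
  have hfib : (Finset.univ.offDiag.filter
      (fun p : Fin n × Fin n => ({p.1, p.2} : Finset (Fin n)) = {x, y})) =
      ({(x, y), (y, x)} : Finset (Fin n × Fin n)) := by
    ext ⟨a, b⟩
    simp only [Finset.mem_filter, Finset.mem_offDiag, Finset.mem_univ, true_and,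
      Finset.mem_insert, Finset.mem_singleton, Prod.mk.injEq]
    constructor
    · rintro ⟨hab, h⟩
      rcases finset_pair_eq_pair_iff.mp h with ⟨rfl, rfl⟩ | ⟨rfl, rfl⟩
      · left; exact ⟨rfl, rfl⟩
      · right; exact ⟨rfl, rfl⟩
    · rintro (⟨rfl, rfl⟩ | ⟨rfl, rfl⟩)
      · exact ⟨hxy, rfl⟩
      · exact ⟨hxy.symm, finset_pair_eq_pair_iff.mpr (Or.inr ⟨rfl, rfl⟩)⟩
  rw [hfib]
  have hcard : ({(x, y), (y, x)} : Finset (Fin n × Fin n)).card = 2 := by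
    apply Finset.card_pair
    intro h
    exact hxy (congrArg Prod.fst h)
  rw [hcard]
  rw [nsmul_eq_mul]
  norm_num

lemma sum_sq_gram (W : Matrix (Fin n) (Fin k) ℝ) (hpars : Wᵀ * W = 1)
    (hunif : Uniform n k W) :
    ∑ p ∈ Finset.univ.offDiag, ((W * Wᵀ) p.1 p.2) ^ 2 =
      (k : ℝ) - n * ((k : ℝ) / n) ^ 2 := by
  have hproj : (W * Wᵀ) * (W * Wᵀ) = W * Wᵀ := by
    rw [Matrix.mul_assoc W Wᵀ (W * Wᵀ), ← Matrix.mul_assoc Wᵀ W Wᵀ, hpars, Matrix.one_mul]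
  have hsymm : ∀ i j : Fin n, (W * Wᵀ) j i = (W * Wᵀ) i j := by
    intro i j
    rw [gram_entry, gram_entry]
    apply Finset.sum_congr rfl
    intros; ring
  have htr : ∑ i, (W * Wᵀ) i i = (k : ℝ) := by
    have h := Matrix.trace_mul_comm W Wᵀ
    rw [hpars] at h
    have : Matrix.trace (W * Wᵀ) = (k : ℝ) := by
      rw [h, Matrix.trace_one]
      simp
    rw [← this]
    rfl
  have hfull : ∑ i, ∑ j, ((W * Wᵀ) i j) ^ 2 = (k : ℝ) := by
    have step : ∀ i, ∑ j, ((W * Wᵀ) i j) ^ 2 = ((W * Wᵀ) * (W * Wᵀ)) i i := by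
      intro i
      rw [Matrix.mul_apply]
      apply Finset.sum_congr rfl
      intro j _
      rw [hsymm i j, sq]
    rw [Finset.sum_congr rfl fun i _ => step i]
    rw [hproj]
    exact htr
  have hdiag : ∑ i, ((W * Wᵀ) i i) ^ 2 = (n : ℝ) * ((k : ℝ) / n) ^ 2 := by
    rw [Finset.sum_congr rfl fun i _ => by rw [hunif i]]
    rw [Finset.sum_const, Finset.card_univ, Fintype.card_fin, nsmul_eq_mul]
  have hsplit : ∑ p ∈ Finset.univ ×ˢ Finset.univ, ((W * Wᵀ) p.1 p.2) ^ 2 =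
      ∑ i, ∑ j, ((W * Wᵀ) i j) ^ 2 := Finset.sum_product _ _ _
  have hoff : Finset.univ.offDiag =
      (Finset.univ ×ˢ Finset.univ).filter (fun p : Fin n × Fin n => p.1 ≠ p.2) := by ext p; simp
  have hdiagset : ((Finset.univ ×ˢ Finset.univ).filter
      (fun p : Fin n × Fin n => ¬ p.1 ≠ p.2)) = Finset.univ.image (fun i : Fin n => (i, i)) := by
    ext ⟨a, b⟩
    simp only [Finset.mem_filter, Finset.mem_image, Finset.mem_product, Finset.mem_univ,
      true_and, not_not, Prod.mk.injEq]
    constructor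
    · rintro rfl; exact ⟨a, rfl, rfl⟩
    · rintro ⟨i, rfl, rfl⟩; rfl
  have hsum2 : ∑ p ∈ (Finset.univ ×ˢ Finset.univ).filter
      (fun p : Fin n × Fin n => ¬ p.1 ≠ p.2), ((W * Wᵀ) p.1 p.2) ^ 2 =
      (n : ℝ) * ((k : ℝ) / n) ^ 2 := by
    rw [hdiagset, Finset.sum_image (fun i _ j _ h => (Prod.mk.injEq _ _ _ _ ▸ h).1)]
    exact hdiag
  have := Finset.sum_filter_add_sum_filter_not (Finset.univ ×ˢ Finset.univ)
    (fun p : Fin n × Fin n => p.1 ≠ p.2) (fun p => ((W * Wᵀ) p.1 p.2) ^ 2)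
  rw [hsum2, hsplit, hfull] at this
  rw [← hoff] at this
  linarith

lemma tot_eq (W : Matrix (Fin n) (Fin k) ℝ) (hunif : Uniform n k W) :
    ∑ S ∈ Finset.univ.filter (fun S : Finset (Fin n) => S.card = 2),
        opNorm (Wᵀ * diagS S * W) ^ 2 =
      (1 / 2) * ∑ p ∈ Finset.univ.offDiag,
        ((k : ℝ) / n + |(W * Wᵀ) p.1 p.2|) ^ 2 := by
  have h := sum_pairs (fun S : Finset (Fin n) => opNorm (Wᵀ * diagS S * W) ^ 2)
  have h2 : ∑ p ∈ Finset.univ.offDiag, opNorm (Wᵀ * diagS ({p.1, p.2} : Finset (Fin n)) * W) ^ 2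
      = ∑ p ∈ Finset.univ.offDiag, ((k : ℝ) / n + |(W * Wᵀ) p.1 p.2|) ^ 2 := by
    apply Finset.sum_congr rfl
    intro p hp
    have hne : p.1 ≠ p.2 := (Finset.mem_offDiag.mp hp).2.2
    rw [SG_pair W hunif hne]
  rw [h2] at h
  have h3 : ∑ S ∈ Finset.univ.filter (fun S : Finset (Fin n) => S.card = 2),
      2 * opNorm (Wᵀ * diagS S * W) ^ 2 =
      2 * ∑ S ∈ Finset.univ.filter (fun S : Finset (Fin n) => S.card = 2),
        opNorm (Wᵀ * diagS S * W) ^ 2 := by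
    rw [Finset.mul_sum]
  rw [h3] at h
  linarith

lemma sum_abs_le (V W : Matrix (Fin n) (Fin k) ℝ)
    (hVp : Vᵀ * V = 1) (hVt : TwoUniform n k V)
    (hWp : Wᵀ * W = 1) (hWu : Uniform n k W) :
    ∑ p ∈ Finset.univ.offDiag, |(W * Wᵀ) p.1 p.2| ≤
      ((Finset.univ.offDiag (α := Fin n)).card : ℝ) * c n k := by
  set D := (Finset.univ.offDiag (α := Fin n)) with hD
  set cc := c n k with hcc
  have hc0 : 0 ≤ cc := Real.sqrt_nonneg _
  have hW2 : ∑ p ∈ D, |(W * Wᵀ) p.1 p.2| ^ 2 = (k : ℝ) - n * ((k : ℝ) / n) ^ 2 := by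
    simp_rw [sq_abs]
    exact sum_sq_gram W hWp hWu
  have hV2 : ∑ p ∈ D, |(V * Vᵀ) p.1 p.2| ^ 2 = (k : ℝ) - n * ((k : ℝ) / n) ^ 2 := by
    simp_rw [sq_abs]
    exact sum_sq_gram V hVp hVt.1
  have hVc : ∀ p ∈ D, |(V * Vᵀ) p.1 p.2| = cc := fun p hp =>
    hVt.2 p.1 p.2 (Finset.mem_offDiag.mp hp).2.2
  have hMc : (D.card : ℝ) * cc ^ 2 = (k : ℝ) - n * ((k : ℝ) / n) ^ 2 := by
    rw [← hV2, Finset.sum_congr rfl (fun p hp => by rw [hVc p hp]), Finset.sum_const,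
      nsmul_eq_mul]
  have hexp : ∑ p ∈ D, (cc - |(W * Wᵀ) p.1 p.2|) ^ 2 =
      (D.card : ℝ) * cc ^ 2 - 2 * cc * (∑ p ∈ D, |(W * Wᵀ) p.1 p.2|) +
        ((k : ℝ) - n * ((k : ℝ) / n) ^ 2) := by
    have hpt : ∀ p ∈ D, (cc - |(W * Wᵀ) p.1 p.2|) ^ 2 =
        cc ^ 2 - (2 * cc) * |(W * Wᵀ) p.1 p.2| + |(W * Wᵀ) p.1 p.2| ^ 2 := by
      intros; ring
    rw [Finset.sum_congr rfl hpt]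
    rw [Finset.sum_add_distrib, Finset.sum_sub_distrib, Finset.sum_const, ← Finset.mul_sum,
      hW2, nsmul_eq_mul]
  have hnn : 0 ≤ ∑ p ∈ D, (cc - |(W * Wᵀ) p.1 p.2|) ^ 2 :=
    Finset.sum_nonneg fun p _ => sq_nonneg _
  rcases hc0.lt_or_eq with hcpos | hczero
  · have h2 : 2 * cc * (∑ p ∈ D, |(W * Wᵀ) p.1 p.2|) ≤ 2 * ((D.card : ℝ) * cc ^ 2) := by
      nlinarith [hnn, hexp, hMc]
    nlinarith [h2, hcpos]
  · have hE0 : (k : ℝ) - n * ((k : ℝ) / n) ^ 2 = 0 := by rw [← hMc, ← hczero]; ring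
    have hzero : ∀ p ∈ D, |(W * Wᵀ) p.1 p.2| = 0 := by
      intro p hp
      have hsq : ∀ p ∈ D, (0:ℝ) ≤ |(W * Wᵀ) p.1 p.2| ^ 2 := fun p _ => sq_nonneg _
      have := (Finset.sum_eq_zero_iff_of_nonneg hsq).mp (by rw [hW2, hE0]) p hp
      exact pow_eq_zero_iff (n := 2) (by norm_num) |>.mp this
    rw [Finset.sum_congr rfl hzero, Finset.sum_const, ← hczero]
    simp

lemma sum_abs_lt (V W : Matrix (Fin n) (Fin k) ℝ)
    (hVp : Vᵀ * V = 1) (hVt : TwoUniform n k V)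
    (hWp : Wᵀ * W = 1) (hWu : Uniform n k W)
    (hbad : ∃ p ∈ Finset.univ.offDiag (α := Fin n), |(W * Wᵀ) p.1 p.2| ≠ c n k) :
    ∑ p ∈ Finset.univ.offDiag, |(W * Wᵀ) p.1 p.2| <
      ((Finset.univ.offDiag (α := Fin n)).card : ℝ) * c n k := by
  set D := (Finset.univ.offDiag (α := Fin n)) with hD
  set cc := c n k with hcc
  have hc0 : 0 ≤ cc := Real.sqrt_nonneg _
  have hW2 : ∑ p ∈ D, |(W * Wᵀ) p.1 p.2| ^ 2 = (k : ℝ) - n * ((k : ℝ) / n) ^ 2 := by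
    simp_rw [sq_abs]
    exact sum_sq_gram W hWp hWu
  have hV2 : ∑ p ∈ D, |(V * Vᵀ) p.1 p.2| ^ 2 = (k : ℝ) - n * ((k : ℝ) / n) ^ 2 := by
    simp_rw [sq_abs]
    exact sum_sq_gram V hVp hVt.1
  have hVc : ∀ p ∈ D, |(V * Vᵀ) p.1 p.2| = cc := fun p hp =>
    hVt.2 p.1 p.2 (Finset.mem_offDiag.mp hp).2.2
  have hMc : (D.card : ℝ) * cc ^ 2 = (k : ℝ) - n * ((k : ℝ) / n) ^ 2 := by
    rw [← hV2, Finset.sum_congr rfl (fun p hp => by rw [hVc p hp]), Finset.sum_const,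
      nsmul_eq_mul]
  have hexp : ∑ p ∈ D, (cc - |(W * Wᵀ) p.1 p.2|) ^ 2 =
      (D.card : ℝ) * cc ^ 2 - 2 * cc * (∑ p ∈ D, |(W * Wᵀ) p.1 p.2|) +
        ((k : ℝ) - n * ((k : ℝ) / n) ^ 2) := by
    have hpt : ∀ p ∈ D, (cc - |(W * Wᵀ) p.1 p.2|) ^ 2 =
        cc ^ 2 - (2 * cc) * |(W * Wᵀ) p.1 p.2| + |(W * Wᵀ) p.1 p.2| ^ 2 := by
      intros; ring
    rw [Finset.sum_congr rfl hpt]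
    rw [Finset.sum_add_distrib, Finset.sum_sub_distrib, Finset.sum_const, ← Finset.mul_sum,
      hW2, nsmul_eq_mul]
  obtain ⟨p0, hp0, hp0ne⟩ := hbad
  have hpos : 0 < ∑ p ∈ D, (cc - |(W * Wᵀ) p.1 p.2|) ^ 2 := by
    apply Finset.sum_pos' (fun p _ => sq_nonneg _)
    refine ⟨p0, hp0, ?_⟩
    have hne : cc - |(W * Wᵀ) p0.1 p0.2| ≠ 0 := fun h => hp0ne (by linarith [sub_eq_zero.mp h])
    exact lt_of_le_of_ne (sq_nonneg _) (Ne.symm (pow_ne_zero 2 hne))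
  have hcpos : 0 < cc := by
    rcases hc0.lt_or_eq with h | h
    · exact h
    · exfalso
      have hE0 : (k : ℝ) - n * ((k : ℝ) / n) ^ 2 = 0 := by rw [← hMc, ← h]; ring
      have hsq : ∀ p ∈ D, (0:ℝ) ≤ |(W * Wᵀ) p.1 p.2| ^ 2 := fun p _ => sq_nonneg _
      have h0 := (Finset.sum_eq_zero_iff_of_nonneg hsq).mp (by rw [hW2, hE0]) p0 hp0
      exact hp0ne (by rw [pow_eq_zero_iff (n := 2) (by norm_num) |>.mp h0, ← h])
  nlinarith [hexp, hMc, hpos, hcpos]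

lemma errP_expand (W : Matrix (Fin n) (Fin k) ℝ) :
    errP W 2 2 = (((n.choose 2 : ℝ))⁻¹ *
      ∑ S ∈ Finset.univ.filter (fun S : Finset (Fin n) => S.card = 2),
        opNorm (Wᵀ * diagS S * W) ^ 2) ^ ((1 : ℝ) / 2) := by
  rw [errP]
  congr 1
  congr 1
  apply Finset.sum_congr rfl
  intro S _
  rw [show ((2:ℝ)) = ((2 : ℕ) : ℝ) by norm_num, Real.rpow_natCast]

lemma errP_le_of (V W : Matrix (Fin n) (Fin k) ℝ)
    (hVp : Vᵀ * V = 1) (hVt : TwoUniform n k V)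
    (hWp : Wᵀ * W = 1) (hWu : Uniform n k W) :
    errP W 2 2 ≤ errP V 2 2 := by
  rw [errP_expand, errP_expand]
  have hk0 : (0:ℝ) ≤ (k : ℝ) / n := by positivity
  have hsum := sum_abs_le V W hVp hVt hWp hWu
  have hVc : ∀ p ∈ Finset.univ.offDiag (α := Fin n), |(V * Vᵀ) p.1 p.2| = c n k := fun p hp =>
    hVt.2 p.1 p.2 (Finset.mem_offDiag.mp hp).2.2
  have hW2 : ∑ p ∈ Finset.univ.offDiag, |(W * Wᵀ) p.1 p.2| ^ 2 =
      (k : ℝ) - n * ((k : ℝ) / n) ^ 2 := by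
    simp_rw [sq_abs]; exact sum_sq_gram W hWp hWu
  have hV2 : ∑ p ∈ Finset.univ.offDiag, |(V * Vᵀ) p.1 p.2| ^ 2 =
      (k : ℝ) - n * ((k : ℝ) / n) ^ 2 := by
    simp_rw [sq_abs]; exact sum_sq_gram V hVp hVt.1
  have hoff : ∑ p ∈ Finset.univ.offDiag, ((k : ℝ) / n + |(W * Wᵀ) p.1 p.2|) ^ 2 ≤
      ∑ p ∈ Finset.univ.offDiag, ((k : ℝ) / n + |(V * Vᵀ) p.1 p.2|) ^ 2 := by
    have hexpW : ∑ p ∈ Finset.univ.offDiag, ((k : ℝ) / n + |(W * Wᵀ) p.1 p.2|) ^ 2 =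
        ((Finset.univ.offDiag (α := Fin n)).card : ℝ) * ((k : ℝ) / n) ^ 2 +
          2 * ((k : ℝ) / n) * (∑ p ∈ Finset.univ.offDiag, |(W * Wᵀ) p.1 p.2|) +
          ((k : ℝ) - n * ((k : ℝ) / n) ^ 2) := by
      have hpt : ∀ p ∈ Finset.univ.offDiag (α := Fin n),
          ((k : ℝ) / n + |(W * Wᵀ) p.1 p.2|) ^ 2 =
          ((k : ℝ) / n) ^ 2 + (2 * ((k : ℝ) / n)) * |(W * Wᵀ) p.1 p.2| +
            |(W * Wᵀ) p.1 p.2| ^ 2 := by intros; ring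
      rw [Finset.sum_congr rfl hpt, Finset.sum_add_distrib, Finset.sum_add_distrib,
        Finset.sum_const, ← Finset.mul_sum, hW2, nsmul_eq_mul]
    have hexpV : ∑ p ∈ Finset.univ.offDiag, ((k : ℝ) / n + |(V * Vᵀ) p.1 p.2|) ^ 2 =
        ((Finset.univ.offDiag (α := Fin n)).card : ℝ) * ((k : ℝ) / n) ^ 2 +
          2 * ((k : ℝ) / n) * (((Finset.univ.offDiag (α := Fin n)).card : ℝ) * c n k) +
          ((k : ℝ) - n * ((k : ℝ) / n) ^ 2) := by
      have hpt : ∀ p ∈ Finset.univ.offDiag (α := Fin n),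
          ((k : ℝ) / n + |(V * Vᵀ) p.1 p.2|) ^ 2 =
          ((k : ℝ) / n) ^ 2 + (2 * ((k : ℝ) / n)) * |(V * Vᵀ) p.1 p.2| +
            |(V * Vᵀ) p.1 p.2| ^ 2 := by intros; ring
      rw [Finset.sum_congr rfl hpt, Finset.sum_add_distrib, Finset.sum_add_distrib,
        Finset.sum_const, ← Finset.mul_sum, hV2, nsmul_eq_mul,
        Finset.sum_congr rfl (fun p hp => by rw [hVc p hp]), Finset.sum_const, nsmul_eq_mul]
    rw [hexpW, hexpV]
    nlinarith [hsum, hk0]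
  apply Real.rpow_le_rpow
  · apply mul_nonneg (by positivity)
    exact Finset.sum_nonneg fun S _ => sq_nonneg _
  · apply mul_le_mul_of_nonneg_left _ (by positivity)
    rw [tot_eq W hWu, tot_eq V hVt.1]
    linarith [hoff]
  · norm_num

lemma errP_lt_of (V W : Matrix (Fin n) (Fin k) ℝ)
    (hVp : Vᵀ * V = 1) (hVt : TwoUniform n k V)
    (hWp : Wᵀ * W = 1) (hWu : Uniform n k W)
    (hbad : ∃ i j : Fin n, i ≠ j ∧ |(W * Wᵀ) i j| ≠ c n k)
    (hk : k ≠ 0) :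
    errP W 2 2 < errP V 2 2 := by
  obtain ⟨i0, j0, hij0, hne0⟩ := hbad
  have hn2 : 2 ≤ n := by
    by_contra h
    push_neg at h
    apply hij0
    have h1 := i0.isLt
    have h2 := j0.isLt
    apply Fin.ext
    omega
  have hbadD : ∃ p ∈ Finset.univ.offDiag (α := Fin n), |(W * Wᵀ) p.1 p.2| ≠ c n k :=
    ⟨(i0, j0), Finset.mem_offDiag.mpr ⟨Finset.mem_univ _, Finset.mem_univ _, hij0⟩, hne0⟩
  have hkpos : (0:ℝ) < (k : ℝ) / n := by
    apply div_pos
    · exact_mod_cast Nat.pos_of_ne_zero hk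
    · exact_mod_cast (by omega : 0 < n)
  have hsum := sum_abs_lt V W hVp hVt hWp hWu hbadD
  have hVc : ∀ p ∈ Finset.univ.offDiag (α := Fin n), |(V * Vᵀ) p.1 p.2| = c n k := fun p hp =>
    hVt.2 p.1 p.2 (Finset.mem_offDiag.mp hp).2.2
  have hW2 : ∑ p ∈ Finset.univ.offDiag, |(W * Wᵀ) p.1 p.2| ^ 2 =
      (k : ℝ) - n * ((k : ℝ) / n) ^ 2 := by
    simp_rw [sq_abs]; exact sum_sq_gram W hWp hWu
  have hV2 : ∑ p ∈ Finset.univ.offDiag, |(V * Vᵀ) p.1 p.2| ^ 2 =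
      (k : ℝ) - n * ((k : ℝ) / n) ^ 2 := by
    simp_rw [sq_abs]; exact sum_sq_gram V hVp hVt.1
  have hoff : ∑ p ∈ Finset.univ.offDiag, ((k : ℝ) / n + |(W * Wᵀ) p.1 p.2|) ^ 2 <
      ∑ p ∈ Finset.univ.offDiag, ((k : ℝ) / n + |(V * Vᵀ) p.1 p.2|) ^ 2 := by
    have hexpW : ∑ p ∈ Finset.univ.offDiag, ((k : ℝ) / n + |(W * Wᵀ) p.1 p.2|) ^ 2 =
        ((Finset.univ.offDiag (α := Fin n)).card : ℝ) * ((k : ℝ) / n) ^ 2 +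
          2 * ((k : ℝ) / n) * (∑ p ∈ Finset.univ.offDiag, |(W * Wᵀ) p.1 p.2|) +
          ((k : ℝ) - n * ((k : ℝ) / n) ^ 2) := by
      have hpt : ∀ p ∈ Finset.univ.offDiag (α := Fin n),
          ((k : ℝ) / n + |(W * Wᵀ) p.1 p.2|) ^ 2 =
          ((k : ℝ) / n) ^ 2 + (2 * ((k : ℝ) / n)) * |(W * Wᵀ) p.1 p.2| +
            |(W * Wᵀ) p.1 p.2| ^ 2 := by intros; ring
      rw [Finset.sum_congr rfl hpt, Finset.sum_add_distrib, Finset.sum_add_distrib,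
        Finset.sum_const, ← Finset.mul_sum, hW2, nsmul_eq_mul]
    have hexpV : ∑ p ∈ Finset.univ.offDiag, ((k : ℝ) / n + |(V * Vᵀ) p.1 p.2|) ^ 2 =
        ((Finset.univ.offDiag (α := Fin n)).card : ℝ) * ((k : ℝ) / n) ^ 2 +
          2 * ((k : ℝ) / n) * (((Finset.univ.offDiag (α := Fin n)).card : ℝ) * c n k) +
          ((k : ℝ) - n * ((k : ℝ) / n) ^ 2) := by
      have hpt : ∀ p ∈ Finset.univ.offDiag (α := Fin n),
          ((k : ℝ) / n + |(V * Vᵀ) p.1 p.2|) ^ 2 =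
          ((k : ℝ) / n) ^ 2 + (2 * ((k : ℝ) / n)) * |(V * Vᵀ) p.1 p.2| +
            |(V * Vᵀ) p.1 p.2| ^ 2 := by intros; ring
      rw [Finset.sum_congr rfl hpt, Finset.sum_add_distrib, Finset.sum_add_distrib,
        Finset.sum_const, ← Finset.mul_sum, hV2, nsmul_eq_mul,
        Finset.sum_congr rfl (fun p hp => by rw [hVc p hp]), Finset.sum_const, nsmul_eq_mul]
    rw [hexpW, hexpV]
    nlinarith [hsum, hkpos]
  rw [errP_expand, errP_expand]
  have hchoose : (0:ℝ) < ((n.choose 2 : ℕ) : ℝ) := by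
    exact_mod_cast Nat.choose_pos hn2
  apply Real.rpow_lt_rpow
  · apply mul_nonneg (by positivity)
    exact Finset.sum_nonneg fun S _ => sq_nonneg _
  · apply mul_lt_mul_of_pos_left _ (by positivity)
    rw [tot_eq W hWu, tot_eq V hVt.1]
    linarith [hoff]
  · norm_num

lemma gram_zero_of_k_zero (W : Matrix (Fin n) (Fin 0) ℝ) (i j : Fin n) :
    (W * Wᵀ) i j = 0 := by
  rw [gram_entry]
  simp

lemma c_zero_of_k_zero (n : ℕ) : c n 0 = 0 := by
  rw [c]
  norm_num

theorem statement4 (n k : ℕ) :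
    (∀ V : Matrix (Fin n) (Fin k) ℝ, Vᵀ * V = 1 → TwoUniform n k V →
      ∀ W : Matrix (Fin n) (Fin k) ℝ, Wᵀ * W = 1 → Uniform n k W →
        errP W 2 2 ≤ errP V 2 2) ∧
    ((∃ W : Matrix (Fin n) (Fin k) ℝ, Wᵀ * W = 1 ∧ Uniform n k W ∧ ¬ TwoUniform n k W) →
      ∀ V : Matrix (Fin n) (Fin k) ℝ, Vᵀ * V = 1 → Uniform n k V →
        (∀ W : Matrix (Fin n) (Fin k) ℝ, Wᵀ * W = 1 → Uniform n k W →
          errP V 2 2 ≤ errP W 2 2) →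
        ¬ TwoUniform n k V) := by
  constructor
  · intro V hVp hVt W hWp hWu
    exact errP_le_of V W hVp hVt hWp hWu
  · rintro ⟨W, hWp, hWu, hWn⟩ V hVp hVu hmin hVt
    rcases Nat.eq_zero_or_pos k with rfl | hk
    · exact hWn ⟨hWu, fun i j _ => by
        rw [gram_zero_of_k_zero, abs_zero, c_zero_of_k_zero]⟩
    · have hbad : ∃ i j : Fin n, i ≠ j ∧ |(W * Wᵀ) i j| ≠ c n k := by
        have h : ¬ ∀ i j : Fin n, i ≠ j → |(W * Wᵀ) i j| = c n k := fun h => hWn ⟨hWu, h⟩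
        push_neg at h
        obtain ⟨i, j, hij, hne⟩ := h
        exact ⟨i, j, hij, hne⟩
      have h1 := errP_lt_of V W hVp hVt hWp hWu hbad (Nat.pos_iff_ne_zero.mp hk)
      have h2 := hmin W hWp hWu
      linarith

end FramesErasures
end
end

section
/- The trivial real 2-uniform (n,1)- and (n,n−1)-frames (those whose signature matrices are J_n − I_n and I_n − J_n, respectively) are 3-uniform. Conversely, if F is a real 3-uniform (n,k)-frame then k = 1 or k = n−1, and G_F is switching equivalent to the edgeless graph or to the complete graph on n vertices, respectively. -/
open Matrix
open scoped Classical

noncomputable section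

namespace FramesErasures

lemma dot_self_nonneg {k : ℕ} (y : Fin k → ℝ) : 0 ≤ y ⬝ᵥ y :=
  Finset.sum_nonneg fun _ _ => mul_self_nonneg _

lemma norm_euclid {k : ℕ} (y : Fin k → ℝ) :
    ‖(WithLp.equiv 2 (Fin k → ℝ)).symm y‖ = Real.sqrt (y ⬝ᵥ y) := by
  rw [EuclideanSpace.norm_eq]
  congr 1
  simp [dotProduct, Real.norm_eq_abs, sq_abs, sq]

lemma opNorm_le_bound' {k : ℕ} (B : Matrix (Fin k) (Fin k) ℝ) {t : ℝ} (ht : 0 ≤ t)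
    (h : ∀ y : Fin k → ℝ, B.mulVec y ⬝ᵥ B.mulVec y ≤ t ^ 2 * (y ⬝ᵥ y)) :
    opNorm B ≤ t := by
  apply ContinuousLinearMap.opNorm_le_bound _ ht
  intro x
  set y : Fin k → ℝ := WithLp.equiv 2 (Fin k → ℝ) x with hy
  have hx : x = (WithLp.equiv 2 (Fin k → ℝ)).symm y := rfl
  have happ : Matrix.toEuclideanCLM (𝕜 := ℝ) B x
      = (WithLp.equiv 2 (Fin k → ℝ)).symm (B.mulVec y) := by
    rw [hx, WithLp.equiv_symm_apply, Matrix.toEuclideanCLM_toLp]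
  rw [happ, norm_euclid, hx, norm_euclid]
  calc Real.sqrt (B.mulVec y ⬝ᵥ B.mulVec y) ≤ Real.sqrt (t ^ 2 * (y ⬝ᵥ y)) :=
        Real.sqrt_le_sqrt (h y)
    _ = t * Real.sqrt (y ⬝ᵥ y) := by
        rw [Real.sqrt_mul (sq_nonneg t), Real.sqrt_sq ht]

lemma le_opNorm' {k : ℕ} (B : Matrix (Fin k) (Fin k) ℝ) {t : ℝ} (ht : 0 ≤ t)
    {v : Fin k → ℝ} (hv : v ≠ 0) (h : B.mulVec v = t • v) : t ≤ opNorm B := by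
  set x := (WithLp.equiv 2 (Fin k → ℝ)).symm v with hx
  have hx0 : x ≠ 0 := by
    intro h0
    apply hv
    have := congrArg (WithLp.equiv 2 (Fin k → ℝ)) h0
    rw [hx] at this
    simpa using this
  have happ : Matrix.toEuclideanCLM (𝕜 := ℝ) B x = t • x := by
    rw [hx, WithLp.equiv_symm_apply, Matrix.toEuclideanCLM_toLp, h]
    rfl
  have hb := (Matrix.toEuclideanCLM (𝕜 := ℝ) B).le_opNorm x
  rw [happ, norm_smul, Real.norm_eq_abs, abs_of_nonneg ht] at hb
  have hxpos : 0 < ‖x‖ := norm_pos_iff.mpr hx0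
  exact le_of_mul_le_mul_right hb hxpos

lemma dot_shift {a b : ℕ} (A : Matrix (Fin a) (Fin b) ℝ) (x : Fin a → ℝ) (y : Fin b → ℝ) :
    A.mulVec y ⬝ᵥ x = y ⬝ᵥ Aᵀ.mulVec x := by
  rw [Matrix.mulVec_transpose, dotProduct_comm, Matrix.dotProduct_mulVec,
    dotProduct_comm]

/-- Master lemma: computing `opNorm (Vᵀ * D * V)` from spectral data of `D * (V*Vᵀ) * D`. -/
lemma opNorm_VDV {n k : ℕ} (V : Matrix (Fin n) (Fin k) ℝ)
    (D : Matrix (Fin n) (Fin n) ℝ) (hDsymm : Dᵀ = D)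
    {t : ℝ} (ht : 0 < t)
    (hub : ∀ x : Fin n → ℝ, x ⬝ᵥ (D * (V * Vᵀ) * D).mulVec x ≤ t * (x ⬝ᵥ D.mulVec x))
    (u : Fin n → ℝ) (hu : u ≠ 0) (hDu : D.mulVec u = u)
    (hMu : (D * (V * Vᵀ) * D).mulVec u = t • u) :
    opNorm (Vᵀ * D * V) = t := by
  set B := Vᵀ * D * V with hB
  set M := D * (V * Vᵀ) * D with hM
  have hBsymm : Bᵀ = B := by
    rw [hB, Matrix.transpose_mul, Matrix.transpose_mul, Matrix.transpose_transpose, hDsymm,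
      Matrix.mul_assoc]
  have hBB : B * B = Vᵀ * M * V := by
    rw [hB, hM]; simp only [Matrix.mul_assoc]
  apply le_antisymm
  · apply opNorm_le_bound' _ ht.le
    intro y
    set x := V.mulVec y with hxdef
    have h1 : B.mulVec y ⬝ᵥ B.mulVec y = x ⬝ᵥ M.mulVec x := by
      rw [dot_shift B (B.mulVec y) y, hBsymm, Matrix.mulVec_mulVec, hBB,
        Matrix.mul_assoc, ← Matrix.mulVec_mulVec, ← dot_shift V _ y,
        Matrix.mulVec_mulVec]
    have h3 : x ⬝ᵥ D.mulVec x = y ⬝ᵥ B.mulVec y := by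
      conv_lhs => rw [hxdef]
      rw [dot_shift V (D.mulVec x) y, Matrix.mulVec_mulVec, hxdef, Matrix.mulVec_mulVec]
    have hCS : y ⬝ᵥ B.mulVec y ≤ Real.sqrt (y ⬝ᵥ y) * Real.sqrt (B.mulVec y ⬝ᵥ B.mulVec y) := by
      set z := B.mulVec y with hz
      have h := Finset.sum_mul_sq_le_sq_mul_sq Finset.univ y z
      calc y ⬝ᵥ z ≤ |y ⬝ᵥ z| := le_abs_self _
        _ = Real.sqrt ((y ⬝ᵥ z) ^ 2) := (Real.sqrt_sq_eq_abs _).symm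
        _ ≤ Real.sqrt ((y ⬝ᵥ y) * (z ⬝ᵥ z)) := by
            apply Real.sqrt_le_sqrt
            calc (y ⬝ᵥ z) ^ 2 ≤ (∑ i, y i ^ 2) * ∑ i, z i ^ 2 := h
              _ = (y ⬝ᵥ y) * (z ⬝ᵥ z) := by simp [dotProduct, sq]
        _ = _ := Real.sqrt_mul (dot_self_nonneg y) _
    have ha : 0 ≤ Real.sqrt (B.mulVec y ⬝ᵥ B.mulVec y) := Real.sqrt_nonneg _
    have hb : 0 ≤ Real.sqrt (y ⬝ᵥ y) := Real.sqrt_nonneg _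
    set a := Real.sqrt (B.mulVec y ⬝ᵥ B.mulVec y) with hadef
    set b := Real.sqrt (y ⬝ᵥ y) with hbdef
    have haa : B.mulVec y ⬝ᵥ B.mulVec y = a ^ 2 := (Real.sq_sqrt (dot_self_nonneg _)).symm
    have hbb : y ⬝ᵥ y = b ^ 2 := (Real.sq_sqrt (dot_self_nonneg _)).symm
    have key : a ^ 2 ≤ t * (b * a) := by
      rw [← haa]
      calc B.mulVec y ⬝ᵥ B.mulVec y = x ⬝ᵥ M.mulVec x := h1
        _ ≤ t * (x ⬝ᵥ D.mulVec x) := hub x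
        _ = t * (y ⬝ᵥ B.mulVec y) := by rw [h3]
        _ ≤ t * (b * a) := by
            apply mul_le_mul_of_nonneg_left _ ht.le
            exact hCS
    rw [haa, hbb]
    rcases le_or_gt a (t * b) with hab | hab
    · calc a ^ 2 ≤ (t * b) ^ 2 := by nlinarith
        _ = t ^ 2 * b ^ 2 := by ring
    · nlinarith
  · set z := Vᵀ.mulVec u with hzdef
    have hBz : B.mulVec z = t • z := by
      rw [hzdef, Matrix.mulVec_mulVec, hB]
      have : Vᵀ * D * V * Vᵀ = Vᵀ * (D * (V * Vᵀ)) := by simp only [Matrix.mul_assoc]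
      rw [this, ← Matrix.mulVec_mulVec]
      have h2 : (D * (V * Vᵀ)).mulVec u = t • u := by
        conv_lhs => rw [← hDu, Matrix.mulVec_mulVec]
        exact hMu
      rw [h2, Matrix.mulVec_smul]
    have hzz : z ⬝ᵥ z = t * (u ⬝ᵥ u) := by
      have e1 : z ⬝ᵥ z = u ⬝ᵥ (V * Vᵀ).mulVec u := by
        conv_lhs => rw [hzdef]
        rw [dot_shift Vᵀ z u, Matrix.transpose_transpose, hzdef, Matrix.mulVec_mulVec]
      have hMu' : M.mulVec u = D.mulVec ((V * Vᵀ).mulVec u) := by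
        rw [hM, Matrix.mul_assoc, ← Matrix.mulVec_mulVec, ← Matrix.mulVec_mulVec, hDu]
      have e2 : u ⬝ᵥ (V * Vᵀ).mulVec u = u ⬝ᵥ M.mulVec u := by
        calc u ⬝ᵥ (V * Vᵀ).mulVec u = (D.mulVec u) ⬝ᵥ ((V * Vᵀ).mulVec u) := by rw [hDu]
          _ = u ⬝ᵥ Dᵀ.mulVec ((V * Vᵀ).mulVec u) := dot_shift D _ u
          _ = u ⬝ᵥ M.mulVec u := by rw [hDsymm, hMu']
      rw [e1, e2, hMu]
      simp [dotProduct_smul]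
    have hz0 : z ≠ 0 := by
      intro h0
      have h1 : z ⬝ᵥ z = 0 := by rw [h0]; simp
      rw [hzz] at h1
      have hu2 : u ⬝ᵥ u ≠ 0 := fun hc => hu (dotProduct_self_eq_zero.mp hc)
      exact hu2 (by
        rcases mul_eq_zero.mp h1 with h | h
        · exact absurd h ht.ne'
        · exact h)
    exact le_opNorm' B ht.le hz0 hBz


section NormFormula

variable {n k : ℕ} (F : TwoUniformFrame n k)

lemma Q_sym (a b : Fin n) : F.Q b a = F.Q a b := by
  have := congrFun (congrFun F.symm a) b
  simpa [Matrix.transpose_apply] using this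

lemma Q_sq {a b : Fin n} (hab : a ≠ b) : F.Q a b * F.Q a b = 1 := by
  rcases F.offdiag a b hab with h | h <;> simp [h]

lemma c_nonneg : 0 ≤ c n k := Real.sqrt_nonneg _

variable {i j l : Fin n} (hij : i ≠ j) (hil : i ≠ l) (hjl : j ≠ l)

lemma card_three (hij : i ≠ j) (hil : i ≠ l) (hjl : j ≠ l) :
    ({i, j, l} : Finset (Fin n)).card = 3 := by
  rw [Finset.card_insert_of_notMem (by simp [hij, hil]),
    Finset.card_insert_of_notMem (by simp [hjl]), Finset.card_singleton]

lemma diagS_transpose (S : Finset (Fin n)) : (diagS S)ᵀ = diagS S :=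
  Matrix.diagonal_transpose _

lemma diagS_mulVec (S : Finset (Fin n)) (x : Fin n → ℝ) (a : Fin n) :
    (diagS S).mulVec x a = if a ∈ S then x a else 0 := by
  rw [diagS, Matrix.mulVec_diagonal]
  split <;> simp

lemma dot_diagS_nonneg (S : Finset (Fin n)) (x : Fin n → ℝ) :
    0 ≤ x ⬝ᵥ (diagS S).mulVec x := by
  apply Finset.sum_nonneg
  intro a _
  rw [diagS_mulVec]
  split <;> [exact mul_self_nonneg _; simp]

lemma vecMulVec_mulVec (w x : Fin n → ℝ) :
    (Matrix.vecMulVec w w).mulVec x = (w ⬝ᵥ x) • w := by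
  funext a
  simp only [Matrix.mulVec, Matrix.vecMulVec_apply, dotProduct, Pi.smul_apply, smul_eq_mul,
    Finset.sum_mul, Finset.mul_sum]
  exact Finset.sum_congr rfl fun b _ => by ring

lemma diagS_mul_diagS (S : Finset (Fin n)) : diagS S * diagS S = diagS S := by
  ext a b
  rw [diagS, Matrix.diagonal_mul_diagonal]
  by_cases hab : a = b
  · subst hab
    rw [Matrix.diagonal_apply_eq, Matrix.diagonal_apply_eq]
    split <;> simp
  · rw [Matrix.diagonal_apply_ne _ hab, Matrix.diagonal_apply_ne _ hab]

lemma sum_ind (S : Finset (Fin n)) :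
    (∑ a : Fin n, (if a ∈ S then (1 : ℝ) else 0)) = S.card := by
  rw [Finset.sum_ite_mem, Finset.univ_inter, Finset.sum_const, nsmul_eq_mul, mul_one]

lemma normPos (hk : 1 ≤ k) (hij : i ≠ j) (hil : i ≠ l) (hjl : j ≠ l)
    (hp : F.Q i j * F.Q i l * F.Q j l = 1) :
    opNorm (F.Vᵀ * diagS {i, j, l} * F.V) = (k : ℝ) / n + 2 * c n k := by
  classical
  set S : Finset (Fin n) := {i, j, l} with hS
  set cc := c n k with hcc
  set α : ℝ := (k : ℝ) / n with hα
  have hmem : ∀ a : Fin n, a ∈ S ↔ a = i ∨ a = j ∨ a = l := by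
    intro a; simp [hS]
  set w : Fin n → ℝ := fun a =>
    if a = i then 1 else if a = j then F.Q i j else if a = l then F.Q i l else 0 with hw
  have hw_i : w i = 1 := by simp [hw]
  have hw_j : w j = F.Q i j := by simp [hw, hij.symm]
  have hw_l : w l = F.Q i l := by simp [hw, hil.symm, hjl.symm]
  have hw_out : ∀ a, a ∉ S → w a = 0 := by
    intro a ha
    rw [hmem] at ha
    push_neg at ha
    simp [hw, ha.1, ha.2.1, ha.2.2]
  have e : F.Q i j * F.Q i l = F.Q j l := by
    have h3 := Q_sq F hjl
    calc F.Q i j * F.Q i l = F.Q i j * F.Q i l * (F.Q j l * F.Q j l) := by rw [h3, mul_one]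
      _ = (F.Q i j * F.Q i l * F.Q j l) * F.Q j l := by ring
      _ = F.Q j l := by rw [hp, one_mul]
  have hw_sq : ∀ a, w a * w a = if a ∈ S then 1 else 0 := by
    intro a
    by_cases ha : a ∈ S
    · rw [if_pos ha]
      rcases (hmem a).1 ha with rfl | rfl | rfl
      · rw [hw_i]; norm_num
      · rw [hw_j]; exact Q_sq F hij
      · rw [hw_l]; exact Q_sq F hil
    · rw [if_neg ha, hw_out a ha, mul_zero]
  have hQw : ∀ a b, a ∈ S → b ∈ S → a ≠ b → F.Q a b = w a * w b := by
    intro a b haS hbS hab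
    rcases (hmem a).1 haS with ha | ha | ha <;> rcases (hmem b).1 hbS with hb | hb | hb <;>
      rw [ha, hb] at hab ⊢
    · exact absurd rfl hab
    · rw [hw_i, hw_j]; ring
    · rw [hw_i, hw_l]; ring
    · rw [Q_sym F i j, hw_i, hw_j]; ring
    · exact absurd rfl hab
    · rw [hw_j, hw_l, e]
    · rw [Q_sym F i l, hw_l, hw_i]; ring
    · rw [Q_sym F j l, hw_l, hw_j, ← e]; ring
    · exact absurd rfl hab
  have key : diagS S * F.Q * diagS S = Matrix.vecMulVec w w - diagS S := by
    ext a b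
    simp only [diagS, Matrix.mul_diagonal, Matrix.diagonal_mul, Matrix.sub_apply,
      Matrix.vecMulVec_apply, Matrix.diagonal_apply]
    by_cases haS : a ∈ S
    · by_cases hbS : b ∈ S
      · by_cases hab : a = b
        · rw [hab, F.diag, hw_sq, if_pos rfl, if_pos hbS]; ring
        · rw [if_pos haS, if_pos hbS, if_neg hab, hQw a b haS hbS hab]; ring
      · have hab : ¬ a = b := fun h => hbS (h ▸ haS)
        rw [if_pos haS, if_neg hbS, if_neg hab, hw_out b hbS]; ring
    · rw [if_neg haS, hw_out a haS]
      simp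
  have hM : diagS S * (F.V * F.Vᵀ) * diagS S
      = (α - cc) • diagS S + cc • Matrix.vecMulVec w w := by
    rw [F.gram]
    rw [Matrix.mul_add, Matrix.add_mul, Matrix.mul_smul, Matrix.smul_mul, Matrix.mul_smul,
      Matrix.smul_mul, Matrix.mul_one, diagS_mul_diagS, key]
    simp only [← hα, ← hcc]
    rw [smul_sub, sub_smul]
    abel
  have hDw : (diagS S).mulVec w = w := by
    funext a
    rw [diagS_mulVec]
    by_cases ha : a ∈ S
    · rw [if_pos ha]
    · rw [if_neg ha, hw_out a ha]
  have hcard : (S.card : ℝ) = 3 := by rw [hS, card_three hij hil hjl]; norm_num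
  have hww : w ⬝ᵥ w = 3 := by
    rw [dotProduct, Finset.sum_congr rfl fun a _ => hw_sq a, sum_ind, hcard]
  have hw0 : w ≠ 0 := by
    intro h
    have := congrFun h i
    rw [hw_i] at this
    exact one_ne_zero this
  have hCS : ∀ x : Fin n → ℝ, (w ⬝ᵥ x) ^ 2 ≤ 3 * (x ⬝ᵥ (diagS S).mulVec x) := by
    intro x
    set z := (diagS S).mulVec x with hz
    have h1 : w ⬝ᵥ x = ∑ a, w a * z a := by
      apply Finset.sum_congr rfl
      intro a _
      rw [hz, diagS_mulVec]
      by_cases ha : a ∈ S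
      · rw [if_pos ha]
      · rw [if_neg ha, hw_out a ha, zero_mul, zero_mul]
    have h2 : ∑ a, z a ^ 2 = x ⬝ᵥ z := by
      apply Finset.sum_congr rfl
      intro a _
      rw [hz, diagS_mulVec]
      by_cases ha : a ∈ S
      · rw [if_pos ha]; ring
      · rw [if_neg ha]; ring
    have h3 : ∑ a, w a ^ 2 = 3 := by
      rw [← hww, dotProduct]
      exact Finset.sum_congr rfl fun a _ => sq (w a) ▸ by ring
    calc (w ⬝ᵥ x) ^ 2 = (∑ a, w a * z a) ^ 2 := by rw [h1]
      _ ≤ (∑ a, w a ^ 2) * ∑ a, z a ^ 2 := Finset.sum_mul_sq_le_sq_mul_sq _ _ _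
      _ = 3 * (x ⬝ᵥ z) := by rw [h2, h3]
  have hccn : 0 ≤ cc := c_nonneg
  have ht : 0 < α + 2 * cc := by
    have hn0 : 0 < n := i.pos
    have : 0 < α := by
      apply div_pos _ (by exact_mod_cast hn0)
      exact_mod_cast hk
    linarith
  have hub : ∀ x : Fin n → ℝ,
      x ⬝ᵥ (diagS S * (F.V * F.Vᵀ) * diagS S).mulVec x
        ≤ (α + 2 * cc) * (x ⬝ᵥ (diagS S).mulVec x) := by
    intro x
    rw [hM, Matrix.add_mulVec, Matrix.smul_mulVec, Matrix.smul_mulVec,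
      vecMulVec_mulVec, dotProduct_add, dotProduct_smul, dotProduct_smul, dotProduct_smul]
    have hxw : x ⬝ᵥ w = w ⬝ᵥ x := dotProduct_comm _ _
    have := hCS x
    have hs := dot_diagS_nonneg S x
    simp only [smul_eq_mul, hxw]
    nlinarith [this, hs, hccn]
  have heig : (diagS S * (F.V * F.Vᵀ) * diagS S).mulVec w = (α + 2 * cc) • w := by
    rw [hM, Matrix.add_mulVec, Matrix.smul_mulVec, Matrix.smul_mulVec,
      vecMulVec_mulVec, hDw, hww]
    funext a
    simp only [Pi.add_apply, Pi.smul_apply, smul_eq_mul]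
    ring
  exact opNorm_VDV F.V (diagS S) (diagS_transpose S) ht hub w hw0 hDw heig

lemma normNeg (hk : 1 ≤ k) (hij : i ≠ j) (hil : i ≠ l) (hjl : j ≠ l)
    (hp : F.Q i j * F.Q i l * F.Q j l = -1) :
    opNorm (F.Vᵀ * diagS {i, j, l} * F.V) = (k : ℝ) / n + c n k := by
  classical
  set S : Finset (Fin n) := {i, j, l} with hS
  set cc := c n k with hcc
  set α : ℝ := (k : ℝ) / n with hα
  have hmem : ∀ a : Fin n, a ∈ S ↔ a = i ∨ a = j ∨ a = l := by
    intro a; simp [hS]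
  set v : Fin n → ℝ := fun a =>
    if a = i then 1 else if a = j then -F.Q i j else if a = l then -F.Q i l else 0 with hv
  have hv_i : v i = 1 := by simp [hv]
  have hv_j : v j = -F.Q i j := by simp [hv, hij.symm]
  have hv_l : v l = -F.Q i l := by simp [hv, hil.symm, hjl.symm]
  have hv_out : ∀ a, a ∉ S → v a = 0 := by
    intro a ha
    rw [hmem] at ha
    push_neg at ha
    simp [hv, ha.1, ha.2.1, ha.2.2]
  have e : F.Q i j * F.Q i l = -F.Q j l := by
    have h3 := Q_sq F hjl
    calc F.Q i j * F.Q i l = F.Q i j * F.Q i l * (F.Q j l * F.Q j l) := by rw [h3, mul_one]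
      _ = (F.Q i j * F.Q i l * F.Q j l) * F.Q j l := by ring
      _ = -F.Q j l := by rw [hp]; ring
  have hv_sq : ∀ a, v a * v a = if a ∈ S then 1 else 0 := by
    intro a
    by_cases ha : a ∈ S
    · rw [if_pos ha]
      rcases (hmem a).1 ha with rfl | rfl | rfl
      · rw [hv_i]; norm_num
      · rw [hv_j]
        have := Q_sq F hij; nlinarith [this]
      · rw [hv_l]
        have := Q_sq F hil; nlinarith [this]
    · rw [if_neg ha, hv_out a ha, mul_zero]
  have hQv : ∀ a b, a ∈ S → b ∈ S → a ≠ b → F.Q a b = -(v a * v b) := by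
    intro a b haS hbS hab
    rcases (hmem a).1 haS with ha | ha | ha <;> rcases (hmem b).1 hbS with hb | hb | hb <;>
      rw [ha, hb] at hab ⊢
    · exact absurd rfl hab
    · rw [hv_i, hv_j]; ring
    · rw [hv_i, hv_l]; ring
    · rw [Q_sym F i j, hv_i, hv_j]; ring
    · exact absurd rfl hab
    · rw [hv_j, hv_l]
      have : F.Q j l = -(F.Q i j * F.Q i l) := by rw [e]; ring
      rw [this]; ring
    · rw [Q_sym F i l, hv_l, hv_i]; ring
    · rw [Q_sym F j l, hv_l, hv_j]
      have : F.Q j l = -(F.Q i j * F.Q i l) := by rw [e]; ring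
      rw [this]; ring
    · exact absurd rfl hab
  have key : diagS S * F.Q * diagS S = diagS S - Matrix.vecMulVec v v := by
    ext a b
    simp only [diagS, Matrix.mul_diagonal, Matrix.diagonal_mul, Matrix.sub_apply,
      Matrix.vecMulVec_apply, Matrix.diagonal_apply]
    by_cases haS : a ∈ S
    · by_cases hbS : b ∈ S
      · by_cases hab : a = b
        · rw [hab, F.diag, hv_sq, if_pos rfl, if_pos hbS]; ring
        · rw [if_pos haS, if_pos hbS, if_neg hab, hQv a b haS hbS hab]; ring
      · have hab : ¬ a = b := fun h => hbS (h ▸ haS)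
        rw [if_pos haS, if_neg hbS, if_neg hab, hv_out b hbS]; ring
    · rw [if_neg haS, hv_out a haS]
      simp
  have hM : diagS S * (F.V * F.Vᵀ) * diagS S
      = (α + cc) • diagS S - cc • Matrix.vecMulVec v v := by
    rw [F.gram]
    rw [Matrix.mul_add, Matrix.add_mul, Matrix.mul_smul, Matrix.smul_mul, Matrix.mul_smul,
      Matrix.smul_mul, Matrix.mul_one, diagS_mul_diagS, key]
    simp only [← hα, ← hcc]
    rw [smul_sub, add_smul]
    abel
  set u : Fin n → ℝ := fun a => if a = i then F.Q i j else if a = j then 1 else 0 with hu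
  have hu_i : u i = F.Q i j := by simp [hu]
  have hu_j : u j = 1 := by simp [hu, hij.symm]
  have hu_out : ∀ a, a ≠ i → a ≠ j → u a = 0 := by
    intro a h1 h2; simp [hu, h1, h2]
  have hDu : (diagS S).mulVec u = u := by
    funext a
    rw [diagS_mulVec]
    by_cases ha : a ∈ S
    · rw [if_pos ha]
    · rw [if_neg ha]
      have h1 : a ≠ i := fun h => ha ((hmem a).2 (Or.inl h))
      have h2 : a ≠ j := fun h => ha ((hmem a).2 (Or.inr (Or.inl h)))
      rw [hu_out a h1 h2]
  have hvu : v ⬝ᵥ u = 0 := by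
    have hterm : ∀ a, v a * u a
        = (if a = i then F.Q i j else 0) + (if a = j then -F.Q i j else 0) := by
      intro a
      by_cases h1 : a = i
      · subst h1
        rw [if_pos rfl, if_neg hij, hv_i, hu_i, one_mul, add_zero]
      · by_cases h2 : a = j
        · subst h2
          rw [if_neg h1, if_pos rfl, hv_j, hu_j, mul_one, zero_add]
        · rw [if_neg h1, if_neg h2, hu_out a h1 h2, mul_zero, add_zero]
    rw [dotProduct, Finset.sum_congr rfl fun a _ => hterm a, Finset.sum_add_distrib,
      Finset.sum_ite_eq' Finset.univ i fun _ => F.Q i j,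
      Finset.sum_ite_eq' Finset.univ j fun _ => -F.Q i j]
    simp
  have hu0 : u ≠ 0 := by
    intro h
    have := congrFun h j
    rw [hu_j] at this
    exact one_ne_zero this
  have hccn : 0 ≤ cc := c_nonneg
  have ht : 0 < α + cc := by
    have hn0 : 0 < n := i.pos
    have : 0 < α := by
      apply div_pos _ (by exact_mod_cast hn0)
      exact_mod_cast hk
    linarith
  have hub : ∀ x : Fin n → ℝ,
      x ⬝ᵥ (diagS S * (F.V * F.Vᵀ) * diagS S).mulVec x
        ≤ (α + cc) * (x ⬝ᵥ (diagS S).mulVec x) := by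
    intro x
    rw [hM, Matrix.sub_mulVec, Matrix.smul_mulVec, Matrix.smul_mulVec,
      vecMulVec_mulVec, dotProduct_sub, dotProduct_smul, dotProduct_smul, dotProduct_smul]
    have hxv : x ⬝ᵥ v = v ⬝ᵥ x := dotProduct_comm _ _
    simp only [smul_eq_mul, hxv]
    nlinarith [hccn, sq_nonneg (v ⬝ᵥ x)]
  have heig : (diagS S * (F.V * F.Vᵀ) * diagS S).mulVec u = (α + cc) • u := by
    rw [hM, Matrix.sub_mulVec, Matrix.smul_mulVec, Matrix.smul_mulVec,
      vecMulVec_mulVec, hDu, hvu]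
    funext a
    simp only [Pi.sub_apply, Pi.smul_apply, smul_eq_mul, zero_smul, Pi.zero_apply]
    ring
  exact opNorm_VDV F.V (diagS S) (diagS_transpose S) ht hub u hu0 hDu heig

end NormFormula

section Arith

lemma c_sq {n k : ℕ} (hkn : k ≤ n) :
    (c n k) ^ 2 = (k : ℝ) * ((n : ℝ) - k) / ((n : ℝ) ^ 2 * ((n : ℝ) - 1)) := by
  rcases Nat.eq_zero_or_pos n with rfl | hn
  · interval_cases k
    simp [c]
  rcases Nat.lt_or_ge n 2 with h2 | h2
  · have : n = 1 := by omega
    subst this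
    rw [c, Real.sq_sqrt] <;> simp
  apply Real.sq_sqrt
  apply div_nonneg
  · apply mul_nonneg (by positivity)
    have : (k : ℝ) ≤ (n : ℝ) := by exact_mod_cast hkn
    linarith
  · apply mul_nonneg (by positivity)
    have : (2 : ℝ) ≤ (n : ℝ) := by exact_mod_cast h2
    linarith

lemma c_pos {n k : ℕ} (hk : 1 ≤ k) (hkn : k < n) (hn2 : 2 ≤ n) : 0 < c n k := by
  apply Real.sqrt_pos.mpr
  have h1 : (0 : ℝ) < k := by exact_mod_cast hk
  have h2 : (k : ℝ) < n := by exact_mod_cast hkn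
  have h3 : (2 : ℝ) ≤ n := by exact_mod_cast hn2
  apply div_pos
  · apply mul_pos h1; linarith
  · apply mul_pos (by positivity); linarith

lemma solve_k {n k : ℕ} (hn : 3 ≤ n) (hk1 : 1 ≤ k) (hkn : k < n) (δ : ℝ)
    (hδ : δ = 1 ∨ δ = -1)
    (hkey : 2 * ((k : ℝ) / n) + ((n : ℝ) - 2) * (c n k) * δ = 1) :
    (δ = 1 ∧ k = 1) ∨ (δ = -1 ∧ k = n - 1) := by
  set N : ℝ := (n : ℝ) with hN
  set K : ℝ := (k : ℝ) with hK
  set cc := c n k with hcc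
  have hN3 : (3 : ℝ) ≤ N := by rw [hN]; exact_mod_cast hn
  have hK1 : (1 : ℝ) ≤ K := by rw [hK]; exact_mod_cast hk1
  have hKN : K < N := by rw [hK, hN]; exact_mod_cast hkn
  have hN0 : N ≠ 0 := by linarith
  have hcpos : 0 < cc := c_pos hk1 hkn (by omega)
  have hδ2 : δ * δ = 1 := by rcases hδ with h | h <;> rw [h] <;> norm_num
  have hc2' : cc ^ 2 * (N ^ 2 * (N - 1)) = K * (N - K) := by
    rw [hcc, c_sq hkn.le, ← hN, ← hK]
    have hB : N ^ 2 * (N - 1) ≠ 0 := by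
      have h0 : (0:ℝ) < N := by linarith
      have h1 : (0:ℝ) < N - 1 := by linarith
      positivity
    exact div_mul_cancel₀ _ hB
  have hKN' : K / N * N = K := div_mul_cancel₀ K hN0
  have h1 : cc * (N * (N - 2)) * δ = N - 2 * K := by
    linear_combination N * hkey - 2 * hKN'
  have h2 : cc ^ 2 * (N * (N - 2)) ^ 2 = (N - 2 * K) ^ 2 := by
    have := h1
    nlinarith [hδ2, h1]
  have h4 : (K - 1) * (K - (N - 1)) = 0 := by
    have hNN : N ^ 2 * ((K - 1) * (K - (N - 1))) = 0 := by
      linear_combination (N - 2) ^ 2 * hc2' - (N - 1) * h2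
    rcases mul_eq_zero.mp hNN with h | h
    · exact absurd h (by positivity)
    · exact h
  rcases mul_eq_zero.mp h4 with h | h
  · have hKval : K = 1 := by linarith
    have hkval : k = 1 := by rw [hK] at hKval; exact_mod_cast hKval
    left
    refine ⟨?_, hkval⟩
    rcases hδ with h | h
    · exact h
    · exfalso
      rw [h] at h1
      nlinarith [hcpos, hN3, hKval]
  · have hKval : K = N - 1 := by linarith
    have hkval : k = n - 1 := by
      have : (k : ℝ) = ((n - 1 : ℕ) : ℝ) := by
        rw [← hK, hKval, hN, Nat.cast_sub (by omega)]
        norm_num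
      exact_mod_cast this
    right
    refine ⟨?_, hkval⟩
    rcases hδ with h | h
    · exfalso
      rw [h] at h1
      nlinarith [hcpos, hN3, hKval]
    · exact h

end Arith

theorem statement8 (n : ℕ) (hn : 3 ≤ n) :
    (∀ F : TwoUniformFrame n 1, F.Q = Jmat n - 1 → ThreeUniform F) ∧
    (∀ F : TwoUniformFrame n (n - 1), F.Q = 1 - Jmat n → ThreeUniform F) ∧
    (∀ k : ℕ, 1 ≤ k → k < n → ∀ F : TwoUniformFrame n k, ThreeUniform F →
      (k = 1 ∧ SwitchingEquivalent (frameGraph F) (⊥ : SimpleGraph (Fin n))) ∨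
      (k = n - 1 ∧ SwitchingEquivalent (frameGraph F) (⊤ : SimpleGraph (Fin n)))) := by
  refine ⟨?_, ?_, ?_⟩
  · intro F hQ S T hS hT
    have hval : ∀ x y : Fin n, x ≠ y → F.Q x y = 1 := by
      intro x y h
      rw [hQ]
      simp [Jmat, Matrix.sub_apply, Matrix.one_apply_ne h]
    obtain ⟨a, b, e, hab, hae, hbe, rfl⟩ := Finset.card_eq_three.mp hS
    obtain ⟨a', b', e', hab', hae', hbe', rfl⟩ := Finset.card_eq_three.mp hT
    rw [normPos F le_rfl hab hae hbe
        (by rw [hval a b hab, hval a e hae, hval b e hbe]; norm_num),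
      normPos F le_rfl hab' hae' hbe'
        (by rw [hval a' b' hab', hval a' e' hae', hval b' e' hbe']; norm_num)]
  · intro F hQ S T hS hT
    have hk1 : 1 ≤ n - 1 := by omega
    have hval : ∀ x y : Fin n, x ≠ y → F.Q x y = -1 := by
      intro x y h
      rw [hQ]
      simp [Jmat, Matrix.sub_apply, Matrix.one_apply_ne h]
    obtain ⟨a, b, e, hab, hae, hbe, rfl⟩ := Finset.card_eq_three.mp hS
    obtain ⟨a', b', e', hab', hae', hbe', rfl⟩ := Finset.card_eq_three.mp hT
    rw [normNeg F hk1 hab hae hbe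
        (by rw [hval a b hab, hval a e hae, hval b e hbe]; norm_num),
      normNeg F hk1 hab' hae' hbe'
        (by rw [hval a' b' hab', hval a' e' hae', hval b' e' hbe']; norm_num)]
  · intro k hk1 hkn F hF3
    have hcpos : 0 < c n k := c_pos hk1 hkn (by omega)
    set i0 : Fin n := ⟨0, by omega⟩ with hi0
    set i1 : Fin n := ⟨1, by omega⟩ with hi1
    set i2 : Fin n := ⟨2, by omega⟩ with hi2
    have h01 : i0 ≠ i1 := by rw [hi0, hi1]; exact Fin.ne_of_val_ne (by norm_num)
    have h02 : i0 ≠ i2 := by rw [hi0, hi2]; exact Fin.ne_of_val_ne (by norm_num)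
    have h12 : i1 ≠ i2 := by rw [hi1, hi2]; exact Fin.ne_of_val_ne (by norm_num)
    have prodpm : ∀ a b e : Fin n, a ≠ b → a ≠ e → b ≠ e →
        F.Q a b * F.Q a e * F.Q b e = 1 ∨ F.Q a b * F.Q a e * F.Q b e = -1 := by
      intro a b e hab hae hbe
      rcases F.offdiag a b hab with h1 | h1 <;> rcases F.offdiag a e hae with h2 | h2 <;>
        rcases F.offdiag b e hbe with h3 | h3 <;> rw [h1, h2, h3] <;> norm_num
    set δ : ℝ := F.Q i0 i1 * F.Q i0 i2 * F.Q i1 i2 with hδdef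
    have hδ : δ = 1 ∨ δ = -1 := by
      rw [hδdef]; exact prodpm i0 i1 i2 h01 h02 h12
    have hδ2 : δ * δ = 1 := by rcases hδ with h | h <;> rw [h] <;> norm_num
    have hall : ∀ a b e : Fin n, a ≠ b → a ≠ e → b ≠ e →
        F.Q a b * F.Q a e * F.Q b e = δ := by
      intro a b e hab hae hbe
      rcases prodpm a b e hab hae hbe with h1 | h1 <;> rcases hδ with h2 | h2
      · rw [h1, h2]
      · exfalso
        have n1 := normPos F hk1 hab hae hbe h1
        have n2 := normNeg F hk1 h01 h02 h12 (by rw [← hδdef]; exact h2)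
        have heq3 := hF3 {a, b, e} {i0, i1, i2} (card_three hab hae hbe)
          (card_three h01 h02 h12)
        rw [n1, n2] at heq3
        linarith
      · exfalso
        have n1 := normNeg F hk1 hab hae hbe h1
        have n2 := normPos F hk1 h01 h02 h12 (by rw [← hδdef]; exact h2)
        have heq3 := hF3 {a, b, e} {i0, i1, i2} (card_three hab hae hbe)
          (card_three h01 h02 h12)
        rw [n1, n2] at heq3
        linarith
      · rw [h1, h2]
    set ε : Fin n → ℝ := fun a => if a = i0 then 1 else δ * F.Q i0 a with hεdef
    have hε0 : ε i0 = 1 := by rw [hεdef]; simp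
    have hεa : ∀ a, a ≠ i0 → ε a = δ * F.Q i0 a := by
      intro a h; rw [hεdef]; simp [h]
    have hεpm : ∀ a, ε a = 1 ∨ ε a = -1 := by
      intro a
      by_cases h : a = i0
      · left; rw [h, hε0]
      · rw [hεa a h]
        rcases F.offdiag i0 a (fun hh => h hh.symm) with h1 | h1 <;>
          rcases hδ with h2 | h2 <;> rw [h1, h2] <;> norm_num
    have hεsq : ∀ a, ε a * ε a = 1 := by
      intro a; rcases hεpm a with h | h <;> rw [h] <;> norm_num
    have hεQ : ∀ a b : Fin n, a ≠ b → ε a * ε b * F.Q a b = δ := by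
      intro a b hab
      by_cases ha : a = i0
      · subst ha
        rw [hε0, hεa b (Ne.symm hab), one_mul]
        linear_combination δ * Q_sq F hab
      · by_cases hb : b = i0
        · subst hb
          rw [hε0, hεa a ha, mul_one, Q_sym F i0 a]
          linear_combination δ * Q_sq F (fun h => ha h.symm)
        · rw [hεa a ha, hεa b hb]
          have h := hall i0 a b (fun h => ha h.symm) (fun h => hb h.symm) hab
          linear_combination (F.Q i0 a * F.Q i0 b * F.Q a b) * hδ2 + h
    have hrep : ∀ a b : Fin n, a ≠ b → F.Q a b = δ * ε a * ε b := by
      intro a b hab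
      have h1 := hεQ a b hab
      rcases hεpm a with ha | ha <;> rcases hεpm b with hb | hb <;> rw [ha, hb] at h1 ⊢ <;>
        first
        | linear_combination h1
        | linear_combination -h1
    have hGdiag : ∀ a, (F.V * F.Vᵀ) a a = (k : ℝ) / n := by
      intro a
      rw [F.gram]
      simp [Matrix.add_apply, Matrix.smul_apply, Matrix.one_apply_eq, F.diag a]
    have hGoff : ∀ a b : Fin n, a ≠ b → (F.V * F.Vᵀ) a b = c n k * F.Q a b := by
      intro a b hab
      rw [F.gram]
      simp [Matrix.add_apply, Matrix.smul_apply, Matrix.one_apply_ne hab]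
    have hGG : F.V * F.Vᵀ * (F.V * F.Vᵀ) = F.V * F.Vᵀ := by
      calc F.V * F.Vᵀ * (F.V * F.Vᵀ) = F.V * (F.Vᵀ * F.V * F.Vᵀ) := by
            simp only [Matrix.mul_assoc]
        _ = F.V * F.Vᵀ := by rw [F.parseval, Matrix.one_mul]
    have hentry : ∑ a, (F.V * F.Vᵀ) i0 a * (F.V * F.Vᵀ) a i1 = (F.V * F.Vᵀ) i0 i1 := by
      rw [← Matrix.mul_apply, hGG]
    have h10 : i1 ≠ i0 := Ne.symm h01
    have hmem1 : i1 ∈ Finset.univ.erase i0 := Finset.mem_erase.mpr ⟨h10, Finset.mem_univ _⟩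
    rw [← Finset.add_sum_erase _ _ (Finset.mem_univ i0), ← Finset.add_sum_erase _ _ hmem1]
      at hentry
    have hconst : ∀ a ∈ (Finset.univ.erase i0).erase i1,
        (F.V * F.Vᵀ) i0 a * (F.V * F.Vᵀ) a i1 = c n k ^ 2 * (ε i0 * ε i1) := by
      intro a ha
      have ha1 : a ≠ i1 := (Finset.mem_erase.mp ha).1
      have ha0 : a ≠ i0 := (Finset.mem_erase.mp (Finset.mem_erase.mp ha).2).1
      rw [hGoff i0 a (Ne.symm ha0), hGoff a i1 ha1, hrep i0 a (Ne.symm ha0), hrep a i1 ha1]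
      have h2 := hεsq a
      linear_combination (c n k ^ 2 * (ε a * ε a) * (ε i0 * ε i1)) * hδ2
        + (c n k ^ 2 * (ε i0 * ε i1)) * h2
    rw [Finset.sum_congr rfl hconst, Finset.sum_const] at hentry
    have hcard2 : ((Finset.univ.erase i0).erase i1).card = n - 2 := by
      rw [Finset.card_erase_of_mem hmem1, Finset.card_erase_of_mem (Finset.mem_univ _),
        Finset.card_univ, Fintype.card_fin]
      omega
    rw [hcard2, nsmul_eq_mul] at hentry
    have hc22 : ((n - 2 : ℕ) : ℝ) = (n : ℝ) - 2 := by
      rw [Nat.cast_sub (by omega)]; norm_num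
    rw [hc22, hGdiag i0, hGdiag i1, hGoff i0 i1 h01] at hentry
    have hQ01 := hrep i0 i1 h01
    rw [hQ01] at hentry
    have hkey : 2 * ((k : ℝ) / n) + ((n : ℝ) - 2) * c n k * δ = 1 := by
      have hccne : c n k ≠ 0 := ne_of_gt hcpos
      have h1 : c n k * (2 * ((k : ℝ) / n) + ((n : ℝ) - 2) * c n k * δ) = c n k * 1 := by
        rcases hδ with h | h <;> rcases hεpm i0 with h0 | h0 <;> rcases hεpm i1 with hb | hb <;>
          simp only [h, h0, hb] at hentry ⊢ <;>
          first
          | linear_combination hentry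
          | linear_combination -hentry
      exact mul_left_cancel₀ hccne h1
    have hsk := solve_k hn hk1 hkn δ hδ hkey
    have hQif : ∀ a b : Fin n, a ≠ b →
        (if (frameGraph F).Adj a b then (-1 : ℝ) else 1) = F.Q a b := by
      intro a b hab
      by_cases h : F.Q a b = -1
      · rw [if_pos (show (frameGraph F).Adj a b from (⟨hab, h⟩ : a ≠ b ∧ F.Q a b = -1)), h]
      · rw [if_neg (fun hh : (frameGraph F).Adj a b => h (hh : a ≠ b ∧ F.Q a b = -1).2),
          (F.offdiag a b hab).resolve_right h]
    rcases hsk with ⟨hδ1, hk⟩ | ⟨hδ1, hk⟩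
    · left
      refine ⟨hk, Equiv.refl _, ε, hεpm, ?_⟩
      intro a b
      simp only [seidel, Matrix.of_apply, Equiv.refl_apply]
      by_cases hab : a = b
      · rw [if_pos hab, if_pos hab]; ring
      · rw [if_neg hab, if_neg hab]
        have hbot : ¬ (⊥ : SimpleGraph (Fin n)).Adj a b := by simp
        rw [if_neg hbot, hQif a b hab, hεQ a b hab]
        exact hδ1.symm
    · right
      refine ⟨hk, Equiv.refl _, ε, hεpm, ?_⟩
      intro a b
      simp only [seidel, Matrix.of_apply, Equiv.refl_apply]
      by_cases hab : a = b
      · rw [if_pos hab, if_pos hab]; ring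
      · rw [if_neg hab, if_neg hab]
        have htop : (⊤ : SimpleGraph (Fin n)).Adj a b := by simp [hab]
        rw [if_pos htop, hQif a b hab, hεQ a b hab]
        exact hδ1.symm


end FramesErasures
end
end
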